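/- Suppose 0 < 1/m ≪ ε ≪ γ < 1 (ε sufficiently small in terms of γ, m sufficiently large in terms of ε). Let G be an oriented graph on n ≥ 2m vertices, and let U and V be disjoint subsets of the vertex set with |U| = |V| = m such that: whenever S ⊆ U and T ⊆ V satisfy |S|, |T| ≥ εm, the number of edges of G from S to T is at least γ|S||T|/2. Let P = u₁u₂…u_k be a directed path in G with u₁ ∈ V and u_k ∈ U. Let X be the set of those inneighbours u_i of u₁ lying on P with u_i ∈ U and u_{i+1} ∈ V, and let Y be the set of those outneighbours u_i of u_k lying on P with u_i ∈ V and u_{i−1} ∈ U. Suppose |X|, |Y| ≥ γm. Then G contains a directed cycle C whose vertex set is exactly the vertex set of P, such that |E(C) \ E(P)| ≤ 5 and E(P) \ E(C) consists only of edges from X to X⁺ and edges from Y⁻ to Y, where X⁺ is the set of successors on P of the vertices of X and Y⁻ is the set of predecessors on P of the vertices of Y. -/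

import Mathlib

open scoped Classical

private lemma exists_threshold (s : Finset ℕ) :
    ∀ c, c ≤ s.card → ∃ t, (s.filter (fun x => x < t)).card = c := by
  intro c
  induction c with
  | zero => intro _; exact ⟨0, by simp⟩
  | succ n ih =>
    intro hc
    obtain ⟨t, ht⟩ := ih (by omega)
    have hne : (s.filter (fun x => ¬ x < t)).Nonempty := by
      rw [← Finset.card_pos]
      have := Finset.card_filter_add_card_filter_not (s := s) (p := fun x => x < t)
      omega
    have ht'mem := Finset.min'_mem _ hne
    set t' := (s.filter (fun x => ¬ x < t)).min' hne with ht'def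
    rw [Finset.mem_filter] at ht'mem
    refine ⟨t' + 1, ?_⟩
    have heq : s.filter (fun x => x < t' + 1) = insert t' (s.filter (fun x => x < t)) := by
      ext x
      simp only [Finset.mem_filter, Finset.mem_insert]
      constructor
      · rintro ⟨hxs, hx⟩
        by_cases hxt : x < t
        · exact Or.inr ⟨hxs, hxt⟩
        · left
          have : t' ≤ x := Finset.min'_le _ _ (Finset.mem_filter.mpr ⟨hxs, hxt⟩)
          omega
      · rintro (rfl | ⟨hxs, hx⟩)
        · exact ⟨ht'mem.1, by omega⟩
        · have : ¬ t' < t := ht'mem.2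
          exact ⟨hxs, by omega⟩
    rw [heq, Finset.card_insert_of_notMem (by rw [Finset.mem_filter]; push_neg; intro _; omega),
      ht]

private lemma build_perm {Vt : Type} [Fintype Vt] [DecidableEq Vt]
    (u : ℕ → Vt) (k : ℕ) (hk : 2 ≤ k)
    (hinj : ∀ i < k, ∀ j < k, u i = u j → i = j)
    (φ ψ : ℕ → ℕ)
    (hφ : ∀ p, p < k → φ p < k)
    (hinjφ : ∀ p, p < k → ∀ q, q < k → φ p = φ q → p = q)
    (hψ : ∀ a, a < k → ψ a < k ∧ φ (ψ a) = a) :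
    ∃ σ : Equiv.Perm Vt, σ.IsCycle ∧ σ.support = (Finset.range k).image u ∧
      ∀ a, a < k → ∀ t : ℕ,
        ((ψ a + 1 < k ∧ φ (ψ a + 1) = t) ∨ (ψ a + 1 = k ∧ φ 0 = t)) →
        σ (u a) = u t := by
  set L : List Vt := (List.range k).map (fun p => u (φ p)) with hL
  have hlen : L.length = k := by simp [hL]
  have hnd : L.Nodup := by
    rw [hL]
    refine List.Nodup.map_on ?_ List.nodup_range
    intro x hx y hy hxy
    rw [List.mem_range] at hx hy
    exact hinjφ x hx y hy (hinj _ (hφ x hx) _ (hφ y hy) hxy)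
  have hgetL : ∀ p (hp : p < k), L[p]'(by rw [hlen]; exact hp) = u (φ p) := by
    intro p hp; simp [hL]
  refine ⟨L.formPerm, ?_, ?_, ?_⟩
  · exact List.isCycle_formPerm hnd (by rw [hlen]; exact hk)
  · rw [List.support_formPerm_of_nodup L hnd (by
      intro x hx; apply_fun List.length at hx; rw [hlen] at hx; simp at hx; omega)]
    ext b
    simp only [hL, List.mem_toFinset, List.mem_map, List.mem_range, Finset.mem_image,
      Finset.mem_range]
    constructor
    · rintro ⟨p, hp, rfl⟩; exact ⟨φ p, hφ p hp, rfl⟩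
    · rintro ⟨a, ha, rfl⟩; exact ⟨ψ a, (hψ a ha).1, by rw [(hψ a ha).2]⟩
  · intro a ha t hcase
    obtain ⟨hpk, hφa⟩ := hψ a ha
    have h1 : u a = L[ψ a]'(by rw [hlen]; exact hpk) := by rw [hgetL _ hpk, hφa]
    rw [h1, List.formPerm_apply_getElem L hnd _ _]
    rcases hcase with ⟨h2, h3⟩ | ⟨h2, h3⟩
    · simp only [hlen, Nat.mod_eq_of_lt h2]
      rw [hgetL _ h2, h3]
    · simp only [hlen, h2, Nat.mod_self]
      rw [hgetL 0 (by omega), h3]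

private lemma assemble {Vt : Type} [Fintype Vt] [DecidableEq Vt]
    (G : Vt → Vt → Prop) (U V : Finset Vt) (u : ℕ → Vt) (k : ℕ)
    (σ : Equiv.Perm Vt)
    (hsupp : σ.support = (Finset.range k).image u)
    (r₁ r₂ r₃ r₄ r₅ : ℕ)
    (hk1 : k - 1 ∈ ({r₁, r₂, r₃, r₄, r₅} : Set ℕ))
    (hsucc : ∀ a, a < k → a ∉ ({r₁, r₂, r₃, r₄, r₅} : Set ℕ) → σ (u a) = u (a + 1))
    (htype : ∀ a ∈ ({r₁, r₂, r₃, r₄, r₅} : Set ℕ), a + 1 < k →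
      ((G (u a) (u 0) ∧ u a ∈ U ∧ u (a+1) ∈ V) ∨
       (G (u (k-1)) (u (a+1)) ∧ u (a+1) ∈ V ∧ u a ∈ U))) :
    Set.ncard ({e : Vt × Vt | e.1 ∈ σ.support ∧ σ e.1 = e.2} \
      {e : Vt × Vt | ∃ i, i + 1 < k ∧ e = (u i, u (i+1))}) ≤ 5 ∧
    ({e : Vt × Vt | ∃ i, i + 1 < k ∧ e = (u i, u (i+1))} \
      {e : Vt × Vt | e.1 ∈ σ.support ∧ σ e.1 = e.2}) ⊆
      {e : Vt × Vt | ∃ i, i + 1 < k ∧ e = (u i, u (i+1)) ∧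
        ((G (u i) (u 0) ∧ u i ∈ U ∧ u (i+1) ∈ V) ∨
         (G (u (k-1)) (u (i+1)) ∧ u (i+1) ∈ V ∧ u i ∈ U))} := by
  constructor
  · have hsub : ({e : Vt × Vt | e.1 ∈ σ.support ∧ σ e.1 = e.2} \
        {e : Vt × Vt | ∃ i, i + 1 < k ∧ e = (u i, u (i+1))})
        ⊆ (fun a => (u a, σ (u a))) '' ({r₁, r₂, r₃, r₄, r₅} : Set ℕ) := by
      rintro ⟨x, y⟩ ⟨⟨hx, hxy⟩, hnp⟩
      simp only at hx hxy
      rw [hsupp] at hx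
      obtain ⟨a, ha, rfl⟩ := Finset.mem_image.mp hx
      rw [Finset.mem_range] at ha
      by_cases haR : a ∈ ({r₁, r₂, r₃, r₄, r₅} : Set ℕ)
      · exact ⟨a, haR, by simp only; rw [hxy]⟩
      · exfalso
        have hak : a + 1 < k := by
          have : a ≠ k - 1 := fun h => haR (h ▸ hk1)
          omega
        exact hnp ⟨a, hak, by rw [← hsucc a ha haR, ← hxy]⟩
    have hfin : ({r₁, r₂, r₃, r₄, r₅} : Set ℕ).Finite := Set.toFinite _
    refine le_trans (Set.ncard_le_ncard hsub (hfin.image _))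
      (le_trans (Set.ncard_image_le hfin) ?_)
    calc ({r₁, r₂, r₃, r₄, r₅} : Set ℕ).ncard
        ≤ ({r₂, r₃, r₄, r₅} : Set ℕ).ncard + 1 := Set.ncard_insert_le _ _
      _ ≤ (({r₃, r₄, r₅} : Set ℕ).ncard + 1) + 1 :=
          Nat.add_le_add_right (Set.ncard_insert_le _ _) 1
      _ ≤ ((({r₄, r₅} : Set ℕ).ncard + 1) + 1) + 1 :=
          Nat.add_le_add_right (Nat.add_le_add_right (Set.ncard_insert_le _ _) 1) 1
      _ ≤ (((({r₅} : Set ℕ).ncard + 1) + 1) + 1) + 1 :=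
          Nat.add_le_add_right (Nat.add_le_add_right (Nat.add_le_add_right (Set.ncard_insert_le _ _) 1) 1) 1
      _ ≤ 5 := by rw [Set.ncard_singleton]
  · rintro ⟨x, y⟩ ⟨⟨a, hak, he⟩, hnc⟩
    simp only [Prod.ext_iff] at he
    obtain ⟨he1, he2⟩ := he
    subst he1; subst he2
    by_cases haR : a ∈ ({r₁, r₂, r₃, r₄, r₅} : Set ℕ)
    · exact ⟨a, hak, rfl, htype a haR hak⟩
    · exact absurd ⟨hsupp ▸ Finset.mem_image.mpr ⟨a, Finset.mem_range.mpr (by omega), rfl⟩,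
        hsucc a (by omega) haR⟩ hnc


private lemma caseA_perm {Vt : Type} [Fintype Vt] [DecidableEq Vt]
    (u : ℕ → Vt) (k j i : ℕ)
    (ho1 : 2 ≤ j) (ho2 : j < i) (ho3 : i + 2 ≤ k)
    (hinj : ∀ a < k, ∀ b < k, u a = u b → a = b) :
    ∃ σ : Equiv.Perm Vt, σ.IsCycle ∧ σ.support = (Finset.range k).image u ∧
      σ (u (j-1)) = u (i+1) ∧ σ (u (k-1)) = u j ∧ σ (u i) = u 0 ∧
      (∀ a, a < k → a ≠ j - 1 → a ≠ i → a ≠ k - 1 → σ (u a) = u (a+1)) := by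
  obtain ⟨σ, hcyc, hsupp, hval⟩ := build_perm u k (by omega) hinj
    (fun p => if p < j then p else if p < j + (k - 1 - i) then i + 1 + (p - j)
      else j + (p - (j + (k - 1 - i))))
    (fun a => if a < j then a else if a ≤ i then j + (k - 1 - i) + (a - j)
      else j + (a - (i+1)))
    (by intro p hp; (try dsimp only); split_ifs <;> omega)
    (by intro p hp q hq; (try dsimp only); split_ifs <;> omega)
    (by intro a ha; refine ⟨?_, ?_⟩ <;> ((try dsimp only); split_ifs <;> omega))
  refine ⟨σ, hcyc, hsupp, ?_, ?_, ?_, ?_⟩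
  · exact hval (j-1) (by omega) (i+1)
      (Or.inl (by refine ⟨?_, ?_⟩ <;> ((try dsimp only); split_ifs <;> omega)))
  · exact hval (k-1) (by omega) j
      (Or.inl (by refine ⟨?_, ?_⟩ <;> ((try dsimp only); split_ifs <;> omega)))
  · exact hval i (by omega) 0
      (Or.inr (by refine ⟨?_, ?_⟩ <;> ((try dsimp only); split_ifs <;> omega)))
  · intro a ha h1 h2 h3
    exact hval a ha (a+1)
      (Or.inl (by refine ⟨?_, ?_⟩ <;> ((try dsimp only); split_ifs <;> omega)))

set_option maxHeartbeats 10000000 in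
private lemma caseB_perm {Vt : Type} [Fintype Vt] [DecidableEq Vt]
    (u : ℕ → Vt) (k i₁ i₂ j₁ j₂ : ℕ)
    (ho1 : 1 ≤ i₁) (ho2 : i₁ < i₂) (ho3 : i₂ + 2 ≤ j₁) (ho4 : j₁ < j₂) (ho5 : j₂ + 2 ≤ k)
    (hinj : ∀ a < k, ∀ b < k, u a = u b → a = b) :
    ∃ σ : Equiv.Perm Vt, σ.IsCycle ∧ σ.support = (Finset.range k).image u ∧
      σ (u i₁) = u j₂ ∧ σ (u i₂) = u 0 ∧ σ (u (j₁-1)) = u (i₁+1) ∧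
      σ (u (j₂-1)) = u (i₂+1) ∧ σ (u (k-1)) = u j₁ ∧
      (∀ a, a < k → a ≠ i₁ → a ≠ i₂ → a ≠ j₁ - 1 → a ≠ j₂ - 1 → a ≠ k - 1 →
        σ (u a) = u (a+1)) := by
  obtain ⟨σ, hcyc, hsupp, hval⟩ := build_perm u k (by omega) hinj
    (fun p => if p < i₁ + 1 then p
      else if p < i₁ + 1 + (k - j₂) then j₂ + (p - (i₁ + 1))
      else if p < i₁ + 1 + (k - j₂) + (j₂ - j₁) then j₁ + (p - (i₁ + 1 + (k - j₂)))
      else if p < i₁ + 1 + (k - j₂) + (j₂ - j₁) + (j₁ - 1 - i₂) then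
        i₂ + 1 + (p - (i₁ + 1 + (k - j₂) + (j₂ - j₁)))
      else i₁ + 1 + (p - (i₁ + 1 + (k - j₂) + (j₂ - j₁) + (j₁ - 1 - i₂))))
    (fun a => if a < i₁ + 1 then a
      else if a < i₂ + 1 then i₁ + 1 + (k - j₂) + (j₂ - j₁) + (j₁ - 1 - i₂) + (a - (i₁ + 1))
      else if a < j₁ then i₁ + 1 + (k - j₂) + (j₂ - j₁) + (a - (i₂ + 1))
      else if a < j₂ then i₁ + 1 + (k - j₂) + (a - j₁)
      else i₁ + 1 + (a - j₂))
    (by intro p hp; (try dsimp only); split_ifs <;> omega)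
    (by intro p hp q hq; (try dsimp only); split_ifs <;> omega)
    (by intro a ha; refine ⟨?_, ?_⟩ <;> ((try dsimp only); split_ifs <;> omega))
  refine ⟨σ, hcyc, hsupp, ?_, ?_, ?_, ?_, ?_, ?_⟩
  · exact hval i₁ (by omega) j₂
      (Or.inl (by refine ⟨?_, ?_⟩ <;> ((try dsimp only); split_ifs <;> omega)))
  · exact hval i₂ (by omega) 0
      (Or.inr (by refine ⟨?_, ?_⟩ <;> ((try dsimp only); split_ifs <;> omega)))
  · exact hval (j₁-1) (by omega) (i₁+1)
      (Or.inl (by refine ⟨?_, ?_⟩ <;> ((try dsimp only); split_ifs <;> omega)))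
  · exact hval (j₂-1) (by omega) (i₂+1)
      (Or.inl (by refine ⟨?_, ?_⟩ <;> ((try dsimp only); split_ifs <;> omega)))
  · exact hval (k-1) (by omega) j₁
      (Or.inl (by refine ⟨?_, ?_⟩ <;> ((try dsimp only); split_ifs <;> omega)))
  · intro a ha h1 h2 h3 h4 h5
    exact hval a ha (a+1)
      (Or.inl (by refine ⟨?_, ?_⟩ <;> ((try dsimp only); split_ifs <;> omega)))

set_option maxHeartbeats 2000000 in
/-- Rotation–Extension lemma: given a directed path `u 0, …, u (k-1)` in an
oriented graph, with endpoints in `V` resp. `U`, many "rotation" in-neighbours `X` and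
out-neighbours `Y`, and a bipartite expansion property between `U` and `V`, there is a
cycle `σ` on exactly the vertices of the path using at most `5` new edges, and every path
edge not in the cycle goes from `X` to `X⁺` or from `Y⁻` to `Y`. -/
theorem rotation_extension_lemma :
    ∀ γ : ℝ, 0 < γ → γ < 1 →
    ∃ ε₀ : ℝ, 0 < ε₀ ∧
    ∀ ε : ℝ, 0 < ε → ε ≤ ε₀ →
    ∃ m₀ : ℕ, ∀ m : ℕ, m₀ ≤ m →
    ∀ (Vt : Type) [Fintype Vt] [DecidableEq Vt], 2 * m ≤ Fintype.card Vt →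
    ∀ G : Vt → Vt → Prop,
      (∀ v, ¬ G v v) →
      (∀ a b : Vt, G a b → ¬ G b a) →
    ∀ U V : Finset Vt, Disjoint U V → U.card = m → V.card = m →
      (∀ S ⊆ U, ∀ T ⊆ V, ε * (m : ℝ) ≤ (S.card : ℝ) → ε * (m : ℝ) ≤ (T.card : ℝ) →
        γ * (S.card : ℝ) * (T.card : ℝ) / 2 ≤
          (((S ×ˢ T).filter fun p => G p.1 p.2).card : ℝ)) →
    ∀ k : ℕ, 1 ≤ k → ∀ u : ℕ → Vt,
      (∀ i < k, ∀ j < k, u i = u j → i = j) →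
      (∀ i, i + 1 < k → G (u i) (u (i+1))) →
      u 0 ∈ V → u (k-1) ∈ U →
      γ * (m : ℝ) ≤ (((Finset.range k).filter fun i =>
          i + 1 < k ∧ G (u i) (u 0) ∧ u i ∈ U ∧ u (i+1) ∈ V).card : ℝ) →
      γ * (m : ℝ) ≤ (((Finset.range k).filter fun i =>
          1 ≤ i ∧ G (u (k-1)) (u i) ∧ u i ∈ V ∧ u (i-1) ∈ U).card : ℝ) →
      ∃ σ : Equiv.Perm Vt,
        σ.IsCycle ∧
        σ.support = (Finset.range k).image u ∧
        (∀ v ∈ σ.support, G v (σ v)) ∧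
        Set.ncard ({e : Vt × Vt | e.1 ∈ σ.support ∧ σ e.1 = e.2} \
          {e : Vt × Vt | ∃ i, i + 1 < k ∧ e = (u i, u (i+1))}) ≤ 5 ∧
        ({e : Vt × Vt | ∃ i, i + 1 < k ∧ e = (u i, u (i+1))} \
          {e : Vt × Vt | e.1 ∈ σ.support ∧ σ e.1 = e.2}) ⊆
          {e : Vt × Vt | ∃ i, i + 1 < k ∧ e = (u i, u (i+1)) ∧
            ((G (u i) (u 0) ∧ u i ∈ U ∧ u (i+1) ∈ V) ∨
             (G (u (k-1)) (u (i+1)) ∧ u (i+1) ∈ V ∧ u i ∈ U))} := by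
  intro γ hγ0 hγ1
  refine ⟨γ / 100, by positivity, ?_⟩
  intro ε hε0 hεγ
  refine ⟨max 1 ⌈(400:ℝ)/γ⌉₊, ?_⟩
  intro m hm Vt _ _ _hcard G hirr hanti U V hUV hUcard hVcard hexp k hk1 u hinj hpath hu0 huk
    hX hY
  have hm1 : 1 ≤ m := le_trans (le_max_left _ _) hm
  have hm1R : (1:ℝ) ≤ (m:ℝ) := by exact_mod_cast hm1
  have hmR : (400:ℝ)/γ ≤ (m:ℝ) := by
    refine le_trans (Nat.le_ceil _) ?_
    exact_mod_cast le_trans (le_max_right _ _) hm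
  have h400 : (400:ℝ) ≤ γ * m := by
    rw [div_le_iff₀ hγ0] at hmR; linarith
  have hεm_pos : (0:ℝ) < ε * m := mul_pos hε0 (by linarith)
  have hεm_le : ε * m ≤ γ * m / 100 := by
    calc ε * m ≤ γ/100 * m := mul_le_mul_of_nonneg_right hεγ (by linarith)
      _ = γ * m / 100 := by ring
  set XI := (Finset.range k).filter
    (fun i => i + 1 < k ∧ G (u i) (u 0) ∧ u i ∈ U ∧ u (i+1) ∈ V) with hXIdef
  set YI := (Finset.range k).filter
    (fun i => 1 ≤ i ∧ G (u (k-1)) (u i) ∧ u i ∈ V ∧ u (i-1) ∈ U) with hYIdef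
  have hXIR : γ * m ≤ (XI.card : ℝ) := hX
  have hYIR : γ * m ≤ (YI.card : ℝ) := hY
  have hXmem : ∀ i ∈ XI, 1 ≤ i ∧ i + 1 < k ∧ G (u i) (u 0) ∧ u i ∈ U ∧ u (i+1) ∈ V := by
    intro i hi
    rw [hXIdef, Finset.mem_filter] at hi
    obtain ⟨_, h1, h2, h3, h4⟩ := hi
    have : i ≠ 0 := by rintro rfl; exact hirr _ h2
    exact ⟨by omega, h1, h2, h3, h4⟩
  have hYmem : ∀ j ∈ YI, 1 ≤ j ∧ j + 1 < k ∧ G (u (k-1)) (u j) ∧ u j ∈ V ∧ u (j-1) ∈ U := by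
    intro j hj
    rw [hYIdef, Finset.mem_filter, Finset.mem_range] at hj
    obtain ⟨hjk, h1, h2, h3, h4⟩ := hj
    have : j ≠ k - 1 := by intro h; rw [h] at h2; exact hirr _ h2
    exact ⟨h1, by omega, h2, h3, h4⟩
  have hedge : ∀ S T : Finset Vt, S ⊆ U → T ⊆ V → ε * m ≤ S.card → ε * m ≤ T.card →
      ∃ s ∈ S, ∃ t ∈ T, G s t := by
    intro S T hSU hTV hS hT
    have h := hexp S hSU T hTV hS hT
    have hS0 : (0:ℝ) < S.card := lt_of_lt_of_le hεm_pos hS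
    have hT0 : (0:ℝ) < T.card := lt_of_lt_of_le hεm_pos hT
    have hpos : 0 < ((S ×ˢ T).filter fun p => G p.1 p.2).card := by
      by_contra hc
      push_neg at hc
      have h0 : ((S ×ˢ T).filter fun p => G p.1 p.2).card = 0 := by omega
      rw [h0] at h
      push_cast at h
      nlinarith [mul_pos (mul_pos hγ0 hS0) hT0]
    obtain ⟨p, hp⟩ := Finset.card_pos.mp hpos
    rw [Finset.mem_filter, Finset.mem_product] at hp
    exact ⟨p.1, hp.1.1, p.2, hp.1.2, hp.2⟩
  have hucard : ∀ (A : Finset ℕ) (f : ℕ → ℕ), (∀ a ∈ A, f a < k) →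
      (∀ a ∈ A, ∀ b ∈ A, f a = f b → a = b) →
      (A.image (fun a => u (f a))).card = A.card := by
    intro A f hfk hfinj
    apply Finset.card_image_of_injOn
    intro x hx y hy hxy
    exact hfinj x hx y hy (hinj _ (hfk x hx) _ (hfk y hy) hxy)
  obtain ⟨t, ht⟩ := exists_threshold XI (XI.card / 2) (Nat.div_le_self _ _)
  set Xlo := XI.filter (fun x => x < t) with hXlodef
  set Xhi := XI.filter (fun x => ¬ x < t) with hXhidef
  have hXsplit0 : Xlo.card + Xhi.card = XI.card :=
    Finset.card_filter_add_card_filter_not (s := XI) (p := fun x => x < t)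
  have hXhicard : 2 * Xhi.card ≥ XI.card := by omega
  by_cases hcase : ε * m ≤ (((YI.filter (fun x => x < t)).card : ℕ) : ℝ)
  · -- CASE A : many Y-indices below the threshold
    have hYlo_sub_U : (YI.filter (fun x => x < t)).image (fun j => u (j-1)) ⊆ U := by
      intro v hv
      obtain ⟨j, hj, rfl⟩ := Finset.mem_image.mp hv
      exact (hYmem j (Finset.mem_of_mem_filter _ hj)).2.2.2.2
    have hXhi_sub_V : Xhi.image (fun i => u (i+1)) ⊆ V := by
      intro v hv
      obtain ⟨i, hi, rfl⟩ := Finset.mem_image.mp hv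
      exact (hXmem i (Finset.mem_of_mem_filter _ hi)).2.2.2.2
    have hYlo_card : ((YI.filter (fun x => x < t)).image (fun j => u (j-1))).card
        = (YI.filter (fun x => x < t)).card := by
      apply hucard
      · intro a ha
        have := (hYmem a (Finset.mem_of_mem_filter _ ha)).2.1; omega
      · intro a ha b hb hab
        have h1 := (hYmem a (Finset.mem_of_mem_filter _ ha)).1
        have h2 := (hYmem b (Finset.mem_of_mem_filter _ hb)).1
        omega
    have hXhi_card : (Xhi.image (fun i => u (i+1))).card = Xhi.card := by
      apply hucard
      · intro a ha
        have := (hXmem a (Finset.mem_of_mem_filter _ ha)).2.1; omega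
      · intro a ha b hb hab; omega
    obtain ⟨s, hs, w, hw, hGsw⟩ := hedge _ _ hYlo_sub_U hXhi_sub_V
      (by rw [hYlo_card]; exact_mod_cast hcase)
      (by rw [hXhi_card]
          have hc : (XI.card : ℝ) ≤ 2 * Xhi.card := by exact_mod_cast hXhicard
          linarith)
    obtain ⟨j, hjmem, rfl⟩ := Finset.mem_image.mp hs
    obtain ⟨i, himem, rfl⟩ := Finset.mem_image.mp hw
    have hjYI := Finset.mem_of_mem_filter _ hjmem
    have hjlt : j < t := (Finset.mem_filter.mp hjmem).2
    have hiXI := Finset.mem_of_mem_filter _ himem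
    have hige : ¬ i < t := (Finset.mem_filter.mp himem).2
    obtain ⟨hj1, hjk, hGkj, hjV, hjU⟩ := hYmem j hjYI
    obtain ⟨hi1, hik, hGi0, hiU, hiV⟩ := hXmem i hiXI
    have hji : j < i := by omega
    have hj2 : 2 ≤ j := by
      rcases (by omega : j = 1 ∨ 2 ≤ j) with h1 | h2
      · exfalso
        rw [h1] at hjU
        norm_num at hjU
        exact (Finset.disjoint_left.mp hUV hjU) hu0
      · exact h2
    have hk2 : 2 ≤ k := by omega
    obtain ⟨σ, hcyc, hsupp, hs1, hs2, hs3, hsgen⟩ :=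
      caseA_perm u k j i hj2 hji (by omega) hinj
    have hasm := assemble G U V u k σ hsupp (j-1) i (k-1) i i
      (by simp only [Set.mem_insert_iff, Set.mem_singleton_iff]; tauto)
      (by intro a ha haR
          simp only [Set.mem_insert_iff, Set.mem_singleton_iff] at haR
          push_neg at haR
          exact hsgen a ha haR.1 haR.2.1 haR.2.2.1)
      (by intro a haR hak
          simp only [Set.mem_insert_iff, Set.mem_singleton_iff] at haR
          rcases haR with h | h | h | h | h
          · subst h
            right
            have hjj : j - 1 + 1 = j := by omega
            rw [hjj]
            exact ⟨hGkj, hjV, hjU⟩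
          · subst h; left; exact ⟨hGi0, hiU, hiV⟩
          · omega
          · subst h; left; exact ⟨hGi0, hiU, hiV⟩
          · subst h; left; exact ⟨hGi0, hiU, hiV⟩)
    refine ⟨σ, hcyc, hsupp, ?_, hasm.1, hasm.2⟩
    intro v hv
    rw [hsupp] at hv
    obtain ⟨a, ha, rfl⟩ := Finset.mem_image.mp hv
    rw [Finset.mem_range] at ha
    by_cases e1 : a = i
    · rw [e1, hs3]; exact hGi0
    by_cases e2 : a = k - 1
    · rw [e2, hs2]; exact hGkj
    by_cases e3 : a = j - 1
    · rw [e3, hs1]; exact hGsw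
    rw [hsgen a ha e3 e1 e2]
    exact hpath a (by omega)
  · -- CASE B : few Y-indices below the threshold
    push_neg at hcase
    set Yge := YI.filter (fun x => ¬ x < t) with hYgedef
    have hYge : (YI.filter (fun x => x < t)).card + Yge.card = YI.card :=
      Finset.card_filter_add_card_filter_not (s := YI) (p := fun x => x < t)
    set Yhi := Yge.filter (fun x => t < x) with hYhidef
    have hYhicard : Yhi.card + 1 ≥ Yge.card := by
      have h1 : Yhi.card + (Yge.filter (fun x => ¬ t < x)).card = Yge.card :=
        Finset.card_filter_add_card_filter_not (s := Yge) (p := fun x => t < x)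
      have h2 : Yge.filter (fun x => ¬ t < x) ⊆ {t} := by
        intro x hx
        rw [hYgedef] at hx
        simp only [Finset.mem_filter] at hx
        rw [Finset.mem_singleton]
        omega
      have h3 := Finset.card_le_card h2
      rw [Finset.card_singleton] at h3
      omega
    have hYhiR : γ * m - ε * m - 1 ≤ (Yhi.card : ℝ) := by
      have c2 : ((YI.filter (fun x => x < t)).card : ℝ) + (Yge.card : ℝ) = (YI.card : ℝ) := by
        exact_mod_cast hYge
      have c3 : (Yge.card : ℝ) ≤ (Yhi.card : ℝ) + 1 := by exact_mod_cast hYhicard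
      linarith
    obtain ⟨ty, hty⟩ := exists_threshold Yhi (Yhi.card / 2) (Nat.div_le_self _ _)
    set Y1 := Yhi.filter (fun x => x < ty) with hY1def
    set Y2 := Yhi.filter (fun x => ¬ x < ty) with hY2def
    have hYsplit : Y1.card + Y2.card = Yhi.card :=
      Finset.card_filter_add_card_filter_not (s := Yhi) (p := fun x => x < ty)
    have hY1R : (γ * m - ε * m - 3) / 2 ≤ (Y1.card : ℝ) := by
      have hn : Yhi.card ≤ 2 * Y1.card + 1 := by omega
      have hc : (Yhi.card : ℝ) ≤ 2 * Y1.card + 1 := by exact_mod_cast hn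
      linarith
    have hY2R : (γ * m - ε * m - 1) / 2 ≤ (Y2.card : ℝ) := by
      have hn : Yhi.card ≤ 2 * Y2.card := by omega
      have hc : (Yhi.card : ℝ) ≤ 2 * Y2.card := by exact_mod_cast hn
      linarith
    obtain ⟨tx, htx⟩ := exists_threshold Xlo (Xlo.card / 2) (Nat.div_le_self _ _)
    set X1 := Xlo.filter (fun x => x < tx) with hX1def
    set X2 := Xlo.filter (fun x => ¬ x < tx) with hX2def
    have hXsplit : X1.card + X2.card = Xlo.card :=
      Finset.card_filter_add_card_filter_not (s := Xlo) (p := fun x => x < tx)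
    have hXlocard : 2 * Xlo.card + 1 ≥ XI.card := by omega
    have hX1R : (γ * m - 3) / 4 ≤ (X1.card : ℝ) := by
      have hn : XI.card ≤ 4 * X1.card + 3 := by omega
      have hc : (XI.card : ℝ) ≤ 4 * X1.card + 3 := by exact_mod_cast hn
      linarith
    have hX2R : (γ * m - 1) / 4 ≤ (X2.card : ℝ) := by
      have hn : XI.card ≤ 4 * X2.card + 1 := by omega
      have hc : (XI.card : ℝ) ≤ 4 * X2.card + 1 := by exact_mod_cast hn
      linarith
    have hX1mem : ∀ i ∈ X1, i ∈ XI ∧ i < tx ∧ i < t := by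
      intro i hi
      rw [hX1def] at hi
      simp only [Finset.mem_filter] at hi
      rw [hXlodef] at hi
      simp only [Finset.mem_filter] at hi
      tauto
    have hX2mem : ∀ i ∈ X2, i ∈ XI ∧ ¬ i < tx ∧ i < t := by
      intro i hi
      rw [hX2def] at hi
      simp only [Finset.mem_filter] at hi
      rw [hXlodef] at hi
      simp only [Finset.mem_filter] at hi
      tauto
    have hY1mem : ∀ j ∈ Y1, j ∈ YI ∧ j < ty ∧ t < j := by
      intro j hj
      rw [hY1def] at hj
      simp only [Finset.mem_filter] at hj
      rw [hYhidef] at hj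
      simp only [Finset.mem_filter] at hj
      rw [hYgedef] at hj
      simp only [Finset.mem_filter] at hj
      tauto
    have hY2mem : ∀ j ∈ Y2, j ∈ YI ∧ ¬ j < ty ∧ t < j := by
      intro j hj
      rw [hY2def] at hj
      simp only [Finset.mem_filter] at hj
      rw [hYhidef] at hj
      simp only [Finset.mem_filter] at hj
      rw [hYgedef] at hj
      simp only [Finset.mem_filter] at hj
      tauto
    set good1 := X1.filter (fun i => ∃ jj ∈ Y1, G (u (jj-1)) (u (i+1))) with hg1def
    have hbad1 : ((X1.filter (fun i => ¬ ∃ jj ∈ Y1, G (u (jj-1)) (u (i+1)))).card : ℝ)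
        < ε * m := by
      by_contra hcon
      rw [not_lt] at hcon
      obtain ⟨s, hsmem, w, hwmem, hG'⟩ := hedge
        (Y1.image (fun j => u (j-1)))
        ((X1.filter (fun i => ¬ ∃ jj ∈ Y1, G (u (jj-1)) (u (i+1)))).image (fun i => u (i+1)))
        (by intro v hv
            obtain ⟨jj, hjj, rfl⟩ := Finset.mem_image.mp hv
            exact (hYmem jj (hY1mem jj hjj).1).2.2.2.2)
        (by intro v hv
            obtain ⟨ii, hii, rfl⟩ := Finset.mem_image.mp hv
            exact (hXmem ii (hX1mem ii (Finset.mem_of_mem_filter _ hii)).1).2.2.2.2)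
        (by rw [hucard]
            · linarith
            · intro a ha
              have := (hYmem a (hY1mem a ha).1).2.1; omega
            · intro a ha b hb hab
              have h1 := (hYmem a (hY1mem a ha).1).1
              have h2 := (hYmem b (hY1mem b hb).1).1
              omega)
        (by rw [hucard]
            · exact hcon
            · intro a ha
              have := (hXmem a (hX1mem a (Finset.mem_of_mem_filter _ ha)).1).2.1; omega
            · intro a ha b hb hab; omega)
      obtain ⟨jj, hjj, rfl⟩ := Finset.mem_image.mp hsmem
      obtain ⟨ii, hii, rfl⟩ := Finset.mem_image.mp hwmem
      exact (Finset.mem_filter.mp hii).2 ⟨jj, hjj, hG'⟩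
    have hgood1card : ε * m ≤ (good1.card : ℝ) := by
      have hnat : good1.card +
          (X1.filter (fun i => ¬ ∃ jj ∈ Y1, G (u (jj-1)) (u (i+1)))).card = X1.card :=
        Finset.card_filter_add_card_filter_not (s := X1)
          (p := fun i => ∃ jj ∈ Y1, G (u (jj-1)) (u (i+1)))
      have hc : (good1.card : ℝ) +
          ((X1.filter (fun i => ¬ ∃ jj ∈ Y1, G (u (jj-1)) (u (i+1)))).card : ℝ)
          = (X1.card : ℝ) := by exact_mod_cast hnat
      linarith
    set good2 := Y2.filter (fun j => ∃ ii ∈ X2, G (u (j-1)) (u (ii+1))) with hg2def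
    have hbad2 : ((Y2.filter (fun j => ¬ ∃ ii ∈ X2, G (u (j-1)) (u (ii+1)))).card : ℝ)
        < ε * m := by
      by_contra hcon
      rw [not_lt] at hcon
      obtain ⟨s, hsmem, w, hwmem, hG'⟩ := hedge
        ((Y2.filter (fun j => ¬ ∃ ii ∈ X2, G (u (j-1)) (u (ii+1)))).image (fun j => u (j-1)))
        (X2.image (fun i => u (i+1)))
        (by intro v hv
            obtain ⟨jj, hjj, rfl⟩ := Finset.mem_image.mp hv
            exact (hYmem jj (hY2mem jj (Finset.mem_of_mem_filter _ hjj)).1).2.2.2.2)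
        (by intro v hv
            obtain ⟨ii, hii, rfl⟩ := Finset.mem_image.mp hv
            exact (hXmem ii (hX2mem ii hii).1).2.2.2.2)
        (by rw [hucard]
            · exact hcon
            · intro a ha
              have := (hYmem a (hY2mem a (Finset.mem_of_mem_filter _ ha)).1).2.1; omega
            · intro a ha b hb hab
              have h1 := (hYmem a (hY2mem a (Finset.mem_of_mem_filter _ ha)).1).1
              have h2 := (hYmem b (hY2mem b (Finset.mem_of_mem_filter _ hb)).1).1
              omega)
        (by rw [hucard]
            · linarith
            · intro a ha
              have := (hXmem a (hX2mem a ha).1).2.1; omega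
            · intro a ha b hb hab; omega)
      obtain ⟨jj, hjj, rfl⟩ := Finset.mem_image.mp hsmem
      obtain ⟨ii, hii, rfl⟩ := Finset.mem_image.mp hwmem
      exact (Finset.mem_filter.mp hjj).2 ⟨ii, hii, hG'⟩
    have hgood2card : ε * m ≤ (good2.card : ℝ) := by
      have hnat : good2.card +
          (Y2.filter (fun j => ¬ ∃ ii ∈ X2, G (u (j-1)) (u (ii+1)))).card = Y2.card :=
        Finset.card_filter_add_card_filter_not (s := Y2)
          (p := fun j => ∃ ii ∈ X2, G (u (j-1)) (u (ii+1)))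
      have hc : (good2.card : ℝ) +
          ((Y2.filter (fun j => ¬ ∃ ii ∈ X2, G (u (j-1)) (u (ii+1)))).card : ℝ)
          = (Y2.card : ℝ) := by exact_mod_cast hnat
      linarith
    obtain ⟨s, hsm, w, hwm, hGfin⟩ := hedge
      (good1.image (fun i => u i)) (good2.image (fun j => u j))
      (by intro v hv
          obtain ⟨ii, hii, rfl⟩ := Finset.mem_image.mp hv
          exact (hXmem ii (hX1mem ii (Finset.mem_of_mem_filter _ hii)).1).2.2.2.1)
      (by intro v hv
          obtain ⟨jj, hjj, rfl⟩ := Finset.mem_image.mp hv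
          exact (hYmem jj (hY2mem jj (Finset.mem_of_mem_filter _ hjj)).1).2.2.2.1)
      (by rw [hucard]
          · exact hgood1card
          · intro a ha
            have := (hXmem a (hX1mem a (Finset.mem_of_mem_filter _ ha)).1).2.1; omega
          · intro a _ b _ hab; exact hab)
      (by rw [hucard]
          · exact hgood2card
          · intro a ha
            have := (hYmem a (hY2mem a (Finset.mem_of_mem_filter _ ha)).1).2.1; omega
          · intro a _ b _ hab; exact hab)
    obtain ⟨i₁, hi₁g, rfl⟩ := Finset.mem_image.mp hsm
    obtain ⟨j₂, hj₂g, rfl⟩ := Finset.mem_image.mp hwm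
    obtain ⟨hi₁X1, hex1⟩ := Finset.mem_filter.mp hi₁g
    obtain ⟨j₁, hj₁Y1, hGj₁⟩ := hex1
    obtain ⟨hj₂Y2, hex2⟩ := Finset.mem_filter.mp hj₂g
    obtain ⟨i₂, hi₂X2, hGj₂⟩ := hex2
    obtain ⟨hi₁XI, hi₁tx, hi₁t⟩ := hX1mem i₁ hi₁X1
    obtain ⟨hi₂XI, hi₂tx, hi₂t⟩ := hX2mem i₂ hi₂X2
    obtain ⟨hj₁YI, hj₁ty, hj₁t⟩ := hY1mem j₁ hj₁Y1
    obtain ⟨hj₂YI, hj₂ty, hj₂t⟩ := hY2mem j₂ hj₂Y2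
    obtain ⟨hi₁1, hi₁k, hGi₁0, hi₁U, hi₁V⟩ := hXmem i₁ hi₁XI
    obtain ⟨hi₂1, hi₂k, hGi₂0, hi₂U, hi₂V⟩ := hXmem i₂ hi₂XI
    obtain ⟨hj₁1, hj₁k, hGkj₁, hj₁V, hj₁U⟩ := hYmem j₁ hj₁YI
    obtain ⟨hj₂1, hj₂k, hGkj₂, hj₂V, hj₂U⟩ := hYmem j₂ hj₂YI
    have ho1 : 1 ≤ i₁ := hi₁1
    have ho2 : i₁ < i₂ := by omega
    have ho3 : i₂ + 2 ≤ j₁ := by omega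
    have ho4 : j₁ < j₂ := by omega
    have ho5 : j₂ + 2 ≤ k := by omega
    have hk2 : 2 ≤ k := by omega
    obtain ⟨σ, hcyc, hsupp, hsA, hsB, hsC, hsD, hsE, hsgen⟩ :=
      caseB_perm u k i₁ i₂ j₁ j₂ ho1 ho2 ho3 ho4 ho5 hinj
    have hasm := assemble G U V u k σ hsupp i₁ i₂ (j₁-1) (j₂-1) (k-1)
      (by simp only [Set.mem_insert_iff, Set.mem_singleton_iff]; tauto)
      (by intro a ha haR
          simp only [Set.mem_insert_iff, Set.mem_singleton_iff] at haR
          push_neg at haR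
          exact hsgen a ha haR.1 haR.2.1 haR.2.2.1 haR.2.2.2.1 haR.2.2.2.2)
      (by intro a haR hak
          simp only [Set.mem_insert_iff, Set.mem_singleton_iff] at haR
          rcases haR with h | h | h | h | h
          · subst h; left; exact ⟨hGi₁0, hi₁U, hi₁V⟩
          · subst h; left; exact ⟨hGi₂0, hi₂U, hi₂V⟩
          · subst h
            right
            have hjj : j₁ - 1 + 1 = j₁ := by omega
            rw [hjj]
            exact ⟨hGkj₁, hj₁V, hj₁U⟩
          · subst h
            right
            have hjj : j₂ - 1 + 1 = j₂ := by omega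
            rw [hjj]
            exact ⟨hGkj₂, hj₂V, hj₂U⟩
          · omega)
    refine ⟨σ, hcyc, hsupp, ?_, hasm.1, hasm.2⟩
    intro v hv
    rw [hsupp] at hv
    obtain ⟨a, ha, rfl⟩ := Finset.mem_image.mp hv
    rw [Finset.mem_range] at ha
    by_cases e1 : a = i₁
    · rw [e1, hsA]; exact hGfin
    by_cases e2 : a = i₂
    · rw [e2, hsB]; exact hGi₂0
    by_cases e3 : a = j₁ - 1
    · rw [e3, hsC]; exact hGj₁
    by_cases e4 : a = j₂ - 1
    · rw [e4, hsD]; exact hGj₂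
    by_cases e5 : a = k - 1
    · rw [e5, hsE]; exact hGkj₁
    rw [hsgen a ha e1 e2 e3 e4 e5]
    exact hpath a (by omega)
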